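/- arXiv:1802.06384 — 2 statements merged into one kernel-verified Lean document; each statement's English description precedes it below -/
import Mathlib

section
/- Let X, Y be square-integrable random vectors in ℝⁿ, ℝᵐ with Σ_X invertible, and let W ∈ ℝ^{p×n}. Set q(W) = Σ_{YX} Wᵀ (W Σ_X Wᵀ)^†. Then q(W) minimizes U ↦ E‖U W X − Y‖² over U ∈ ℝ^{m×p}, and the minimum value equals tr(Σ_Y) − tr((WK)^† (WK) M), where K = Σ_X^{1/2} and M = K^{-1} Σ_{XY} Σ_{YX} K^{-1}. -/
open Matrix MeasureTheory

/-- `B` is the Moore–Penrose pseudoinverse of `A` (the four Penrose conditions). -/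
def IsMoorePenrose {m n : ℕ} (A : Matrix (Fin m) (Fin n) ℝ)
    (B : Matrix (Fin n) (Fin m) ℝ) : Prop :=
  A * B * A = A ∧ B * A * B = B ∧ (A * B)ᵀ = A * B ∧ (B * A)ᵀ = B * A

lemma isMoorePenrose_unique {a b : ℕ} {A : Matrix (Fin a) (Fin b) ℝ}
    {B C : Matrix (Fin b) (Fin a) ℝ}
    (hB : IsMoorePenrose A B) (hC : IsMoorePenrose A C) : B = C := by
  obtain ⟨hB1, hB2, hB3, hB4⟩ := hB
  obtain ⟨hC1, hC2, hC3, hC4⟩ := hC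
  have t1 : (A * C * A)ᵀ = Aᵀ * (Cᵀ * Aᵀ) := by
    rw [Matrix.transpose_mul (A * C) A, Matrix.transpose_mul A C]
  have hAB : A * B = A * C := by
    calc A * B = (A * B)ᵀ := hB3.symm
    _ = Bᵀ * Aᵀ := Matrix.transpose_mul A B
    _ = Bᵀ * (Aᵀ * (Cᵀ * Aᵀ)) := by rw [← t1, hC1]
    _ = (Bᵀ * Aᵀ) * (Cᵀ * Aᵀ) := by rw [Matrix.mul_assoc]
    _ = (A * B)ᵀ * (A * C)ᵀ := by rw [Matrix.transpose_mul A B, Matrix.transpose_mul A C]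
    _ = (A * B) * (A * C) := by rw [hB3, hC3]
    _ = (A * B * A) * C := by rw [Matrix.mul_assoc (A * B) A C]
    _ = A * C := by rw [hB1]
  have e : A * (C * A) = A := by rw [← Matrix.mul_assoc, hC1]
  have t2 : (A * (C * A))ᵀ = (C * A)ᵀ * Aᵀ := Matrix.transpose_mul A (C * A)
  have hBA : B * A = C * A := by
    calc B * A = (B * A)ᵀ := hB4.symm
    _ = Aᵀ * Bᵀ := Matrix.transpose_mul B A
    _ = (A * (C * A))ᵀ * Bᵀ := by rw [e]
    _ = ((C * A)ᵀ * Aᵀ) * Bᵀ := by rw [t2]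
    _ = (C * A) * (Aᵀ * Bᵀ) := by rw [hC4, Matrix.mul_assoc]
    _ = (C * A) * (B * A)ᵀ := by rw [Matrix.transpose_mul B A]
    _ = (C * A) * (B * A) := by rw [hB4]
    _ = C * (A * (B * A)) := by rw [Matrix.mul_assoc]
    _ = C * (A * B * A) := by rw [Matrix.mul_assoc A B A]
    _ = C * A := by rw [hB1]
  calc B = B * A * B := hB2.symm
  _ = C * A * B := by rw [hBA]
  _ = C * (A * B) := Matrix.mul_assoc _ _ _
  _ = C * (A * C) := by rw [hAB]
  _ = C * A * C := (Matrix.mul_assoc _ _ _).symm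
  _ = C := hC2

lemma trace_mul_transpose_self_nonneg {a b : ℕ} (C : Matrix (Fin a) (Fin b) ℝ) :
    0 ≤ (C * Cᵀ).trace := by
  rw [Matrix.trace]
  refine Finset.sum_nonneg fun i _ => ?_
  simp only [Matrix.diag_apply, Matrix.mul_apply, Matrix.transpose_apply]
  exact Finset.sum_nonneg fun j _ => mul_self_nonneg _

lemma l2_mul_integrable {Ω : Type*} [MeasurableSpace Ω] {ℙ : Measure Ω}
    [IsProbabilityMeasure ℙ] {f g : Ω → ℝ} (hf : MemLp f 2 ℙ) (hg : MemLp g 2 ℙ) :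
    Integrable (fun ω => f ω * g ω) ℙ := by
  have h : MemLp (f • g) 1 ℙ :=
    MemLp.smul (r := 1) hg hf
      (hpqr := ⟨by rw [inv_one, ENNReal.inv_two_add_inv_two]⟩)
  exact (h.integrable le_rfl).congr (Filter.Eventually.of_forall fun ω => by
    simp [Pi.smul_apply', smul_eq_mul])

/-- With `Σ_X` invertible, `q(W) = Σ_{YX} Wᵀ (W Σ_X Wᵀ)†` minimizes
`U ↦ E‖UWX − Y‖²`, and the minimum value is
`tr(Σ_Y) − tr((WK)†(WK) M)` with `K = Σ_X^{1/2}` and `M = K⁻¹ Σ_{XY} Σ_{YX} K⁻¹`. -/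
theorem stmt6 {Ω : Type*} [MeasurableSpace Ω] (ℙ : Measure Ω) [IsProbabilityMeasure ℙ]
    (n m p : ℕ) (X : Ω → Fin n → ℝ) (Y : Ω → Fin m → ℝ)
    (hX : MemLp X 2 ℙ) (hY : MemLp Y 2 ℙ)
    (SX : Matrix (Fin n) (Fin n) ℝ)
    (hSX : SX = Matrix.of fun i j => ∫ ω, X ω i * X ω j ∂ℙ)
    (SY : Matrix (Fin m) (Fin m) ℝ)
    (hSY : SY = Matrix.of fun i j => ∫ ω, Y ω i * Y ω j ∂ℙ)
    (SYX : Matrix (Fin m) (Fin n) ℝ)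
    (hSYX : SYX = Matrix.of fun i j => ∫ ω, Y ω i * X ω j ∂ℙ)
    (hinv : IsUnit SX.det)
    (K : Matrix (Fin n) (Fin n) ℝ) (hKpsd : K.PosSemidef) (hKsq : K * K = SX)
    (W : Matrix (Fin p) (Fin n) ℝ)
    (D : Matrix (Fin p) (Fin p) ℝ) (hD : IsMoorePenrose (W * SX * Wᵀ) D)
    (G : Matrix (Fin n) (Fin p) ℝ) (hG : IsMoorePenrose (W * K) G)
    (qW : Matrix (Fin m) (Fin p) ℝ) (hqW : qW = SYX * Wᵀ * D)
    (M : Matrix (Fin n) (Fin n) ℝ) (hM : M = K⁻¹ * SYXᵀ * SYX * K⁻¹) :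
    (∀ U : Matrix (Fin m) (Fin p) ℝ,
        (∫ ω, ∑ i, ((qW * W).mulVec (X ω) i - Y ω i) ^ 2 ∂ℙ)
          ≤ ∫ ω, ∑ i, ((U * W).mulVec (X ω) i - Y ω i) ^ 2 ∂ℙ)
    ∧ (∫ ω, ∑ i, ((qW * W).mulVec (X ω) i - Y ω i) ^ 2 ∂ℙ)
        = SY.trace - (G * (W * K) * M).trace := by
  -- component-wise L² membership and integrability of products
  have hXi : ∀ j, MemLp (fun ω => X ω j) 2 ℙ := fun j => by
    exact
      (ContinuousLinearMap.proj (R := ℝ) (φ := fun _ : Fin n => ℝ) j).comp_memLp' hX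
  have hYi : ∀ i, MemLp (fun ω => Y ω i) 2 ℙ := fun i => by
    exact
      (ContinuousLinearMap.proj (R := ℝ) (φ := fun _ : Fin m => ℝ) i).comp_memLp' hY
  have iXX : ∀ j k, Integrable (fun ω => X ω j * X ω k) ℙ := fun j k =>
    l2_mul_integrable (hXi j) (hXi k)
  have iXY : ∀ j i, Integrable (fun ω => X ω j * Y ω i) ℙ := fun j i =>
    l2_mul_integrable (hXi j) (hYi i)
  have iYY : ∀ i i', Integrable (fun ω => Y ω i * Y ω i') ℙ := fun i i' =>
    l2_mul_integrable (hYi i) (hYi i')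
  have hmv : ∀ (A : Matrix (Fin m) (Fin n) ℝ) i, MemLp (fun ω => A.mulVec (X ω) i) 2 ℙ := by
    intro A i
    have h : (fun ω => A.mulVec (X ω) i) = fun ω => ∑ j, A i j * X ω j := by
      funext ω; simp [Matrix.mulVec, dotProduct]
    rw [h]
    exact memLp_finset_sum (μ := ℙ) Finset.univ
      (fun j (_ : j ∈ Finset.univ) => (hXi j).const_mul (A i j))
  have hsq : ∀ (A : Matrix (Fin m) (Fin n) ℝ) i,
      Integrable (fun ω => (A.mulVec (X ω) i - Y ω i) ^ 2) ℙ := by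
    intro A i
    have h := l2_mul_integrable ((hmv A i).sub (hYi i)) ((hmv A i).sub (hYi i))
    simpa [sq] using h
  -- the expansion of the objective
  have key : ∀ A : Matrix (Fin m) (Fin n) ℝ,
      (∫ ω, ∑ i, (A.mulVec (X ω) i - Y ω i) ^ 2 ∂ℙ)
        = (A * SX * Aᵀ).trace - 2 * (A * SYXᵀ).trace + SY.trace := by
    intro A
    rw [integral_finset_sum _ fun i _ => hsq A i]
    have h2 : ∀ i, (∫ ω, (A.mulVec (X ω) i - Y ω i) ^ 2 ∂ℙ)
        = (∑ j, ∑ k, A i j * A i k * ∫ ω, X ω j * X ω k ∂ℙ)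
          - 2 * (∑ j, A i j * ∫ ω, X ω j * Y ω i ∂ℙ)
          + ∫ ω, Y ω i * Y ω i ∂ℙ := by
      intro i
      have hpt : ∀ ω, (A.mulVec (X ω) i - Y ω i) ^ 2
          = (∑ j, ∑ k, A i j * A i k * (X ω j * X ω k))
            - 2 * (∑ j, A i j * (X ω j * Y ω i)) + Y ω i * Y ω i := by
        intro ω
        have h : A.mulVec (X ω) i = ∑ j, A i j * X ω j := by
          simp [Matrix.mulVec, dotProduct]
        rw [h]
        have e1 : (∑ j, A i j * X ω j) ^ 2
            = ∑ j, ∑ k, A i j * A i k * (X ω j * X ω k) := by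
          rw [sq, Finset.sum_mul_sum]
          exact Finset.sum_congr rfl fun j _ =>
            Finset.sum_congr rfl fun k _ => by ring
        have e2 : (∑ j, A i j * X ω j) * Y ω i = ∑ j, A i j * (X ω j * Y ω i) := by
          rw [Finset.sum_mul]
          exact Finset.sum_congr rfl fun j _ => by ring
        rw [sub_sq, e1, mul_assoc 2 (∑ j, A i j * X ω j) (Y ω i), e2, pow_two (Y ω i)]
      have int1 : Integrable (fun ω => ∑ j, ∑ k, A i j * A i k * (X ω j * X ω k)) ℙ :=
        integrable_finset_sum _ fun j _ =>
          integrable_finset_sum _ fun k _ => (iXX j k).const_mul _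
      have int2 : Integrable (fun ω => 2 * ∑ j, A i j * (X ω j * Y ω i)) ℙ :=
        (integrable_finset_sum _ fun j _ => (iXY j i).const_mul _).const_mul 2
      have int12 : Integrable (fun ω => (∑ j, ∑ k, A i j * A i k * (X ω j * X ω k))
          - 2 * ∑ j, A i j * (X ω j * Y ω i)) ℙ := int1.sub int2
      simp_rw [hpt]
      rw [integral_add int12 (iYY i i), integral_sub int1 int2]
      congr 1
      congr 1
      · rw [integral_finset_sum _ fun j _ =>
          (integrable_finset_sum _ fun k _ => (iXX j k).const_mul _ :
            Integrable (fun ω => ∑ k, A i j * A i k * (X ω j * X ω k)) ℙ)]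
        refine Finset.sum_congr rfl fun j _ => ?_
        rw [integral_finset_sum _ fun k _ => (iXX j k).const_mul _]
        exact Finset.sum_congr rfl fun k _ => integral_const_mul _ _
      · rw [integral_const_mul]
        congr 1
        rw [integral_finset_sum _ fun j _ => (iXY j i).const_mul _]
        exact Finset.sum_congr rfl fun j _ => integral_const_mul _ _
    simp_rw [h2]
    rw [Finset.sum_add_distrib, Finset.sum_sub_distrib]
    congr 1
    congr 1
    · rw [hSX]
      simp only [Matrix.trace, Matrix.diag_apply, Matrix.mul_apply, Matrix.transpose_apply,
        Matrix.of_apply, Finset.sum_mul]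
      refine Finset.sum_congr rfl fun i _ => ?_
      rw [Finset.sum_comm]
      exact Finset.sum_congr rfl fun k _ => Finset.sum_congr rfl fun j _ => by ring
    · rw [← Finset.mul_sum, hSYX]
      congr 1
      simp only [Matrix.trace, Matrix.diag_apply, Matrix.mul_apply, Matrix.transpose_apply,
        Matrix.of_apply]
      refine Finset.sum_congr rfl fun i _ => Finset.sum_congr rfl fun j _ => ?_
      congr 1
      exact integral_congr_ae (Filter.Eventually.of_forall fun ω => mul_comm _ _)
    · rw [hSY]
      simp [Matrix.trace, Matrix.diag]
  -- Matrix algebra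
  have hKT : Kᵀ = K := by
    have h := hKpsd.1.eq
    simpa using h
  have hSXT : SXᵀ = SX := by rw [← hKsq, Matrix.transpose_mul, hKT]
  have hKdet : IsUnit K.det := by
    have h : IsUnit (K.det * K.det) := by rw [← Matrix.det_mul, hKsq]; exact hinv
    exact isUnit_of_mul_isUnit_left h
  have hKKinv : K * K⁻¹ = 1 := Matrix.mul_nonsing_inv K hKdet
  -- opaque abbreviations
  obtain ⟨Bm, hBm⟩ : ∃ B, B = W * K := ⟨_, rfl⟩
  obtain ⟨Amat, hAmat⟩ : ∃ A, A = W * SX * Wᵀ := ⟨_, rfl⟩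
  obtain ⟨N, hN⟩ : ∃ N, N = W * SYXᵀ := ⟨_, rfl⟩
  obtain ⟨R, hR⟩ : ∃ R, R = K⁻¹ * SYXᵀ := ⟨_, rfl⟩
  rw [← hBm] at hG ⊢
  rw [← hAmat] at hD
  obtain ⟨hG1, hG2, hG3, hG4⟩ := hG
  have hBtGt : Bmᵀ * Gᵀ = G * Bm := by rw [← Matrix.transpose_mul, hG4]
  have hGtBt : Gᵀ * Bmᵀ = Bm * G := by rw [← Matrix.transpose_mul, hG3]
  have hA : Amat = Bm * Bmᵀ := by
    rw [hAmat, hBm, ← hKsq, Matrix.transpose_mul W K, hKT]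
    simp only [Matrix.mul_assoc]
  have hBBtGt : Bm * Bmᵀ * Gᵀ = Bm := by
    rw [Matrix.mul_assoc Bm Bmᵀ Gᵀ, hBtGt, ← Matrix.mul_assoc Bm G Bm, hG1]
  have hGt : IsMoorePenrose (Bm * Bmᵀ) (Gᵀ * G) := by
    have c3 : Bm * Bmᵀ * (Gᵀ * G) = Bm * G := by
      rw [← Matrix.mul_assoc (Bm * Bmᵀ) Gᵀ G, hBBtGt]
    have c4 : Gᵀ * G * (Bm * Bmᵀ) = Bm * G := by
      calc Gᵀ * G * (Bm * Bmᵀ)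
          = Gᵀ * (G * Bm * Bmᵀ) := by
            rw [Matrix.mul_assoc Gᵀ G (Bm * Bmᵀ), ← Matrix.mul_assoc G Bm Bmᵀ]
      _ = Gᵀ * ((G * Bm)ᵀ * Bmᵀ) := by rw [hG4]
      _ = Gᵀ * (Bmᵀ * Gᵀ * Bmᵀ) := by rw [Matrix.transpose_mul G Bm]
      _ = (Gᵀ * Bmᵀ) * (Gᵀ * Bmᵀ) := by
            rw [Matrix.mul_assoc Bmᵀ Gᵀ Bmᵀ, ← Matrix.mul_assoc Gᵀ Bmᵀ (Gᵀ * Bmᵀ)]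
      _ = (Bm * G) * (Bm * G) := by rw [hGtBt]
      _ = Bm * G * Bm * G := by rw [← Matrix.mul_assoc (Bm * G) Bm G]
      _ = Bm * G := by rw [hG1]
    refine ⟨?_, ?_, ?_, ?_⟩
    · rw [c3, ← Matrix.mul_assoc (Bm * G) Bm Bmᵀ, hG1]
    · rw [Matrix.mul_assoc (Gᵀ * G) (Bm * Bmᵀ) (Gᵀ * G), c3,
        Matrix.mul_assoc Gᵀ G (Bm * G), ← Matrix.mul_assoc G Bm G, hG2]
    · rw [c3, hG3]
    · rw [c4, hG3]
  have hDeq : D = Gᵀ * G := by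
    refine isMoorePenrose_unique ?_ hGt
    rw [← hA]; exact hD
  have hDT : Dᵀ = D := by
    rw [hDeq, Matrix.transpose_mul, Matrix.transpose_transpose]
  have hBtDB : Bmᵀ * D * Bm = G * Bm := by
    rw [hDeq, ← Matrix.mul_assoc Bmᵀ Gᵀ G, hBtGt, hG2]
  have hNBR : N = Bm * R := by
    rw [hN, hBm, hR, Matrix.mul_assoc W K (K⁻¹ * SYXᵀ), ← Matrix.mul_assoc K K⁻¹ SYXᵀ,
      hKKinv, Matrix.one_mul]
  have hNT : Nᵀ = SYX * Wᵀ := by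
    rw [hN, Matrix.transpose_mul, Matrix.transpose_transpose]
  have hqWN : qW = Nᵀ * D := by rw [hqW, hNT]
  have hBAG : Bm = Amat * Gᵀ := by rw [hA, hBBtGt]
  have hADA : Amat * D * Amat = Amat := hD.1
  have hNAG : N = Amat * (Gᵀ * R) := by
    rw [hNBR, hBAG, Matrix.mul_assoc]
  have hADN : Amat * D * N = N := by
    rw [hNAG, ← Matrix.mul_assoc (Amat * D) Amat (Gᵀ * R), hADA]
  have hAT : Amatᵀ = Amat := by
    rw [hAmat, Matrix.transpose_mul (W * SX) Wᵀ, Matrix.transpose_transpose,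
      Matrix.transpose_mul W SX, hSXT, ← Matrix.mul_assoc]
  have hqWT : qWᵀ = D * N := by
    rw [hqWN, Matrix.transpose_mul, Matrix.transpose_transpose, hDT]
  have hqA : qW * Amat = Nᵀ := by
    have h : (qW * Amat)ᵀ = N := by
      rw [Matrix.transpose_mul qW Amat, hAT, hqWT, ← Matrix.mul_assoc Amat D N, hADN]
    calc qW * Amat = (qW * Amat)ᵀᵀ := (Matrix.transpose_transpose _).symm
    _ = Nᵀ := by rw [h]
  have hUAq : ∀ U : Matrix (Fin m) (Fin p) ℝ, U * Amat * qWᵀ = U * N := by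
    intro U
    rw [hqWT, Matrix.mul_assoc U Amat (D * N), ← Matrix.mul_assoc Amat D N, hADN]
  have hqAq : qW * Amat * qWᵀ = qW * N := by
    rw [hqA, hqWT, ← Matrix.mul_assoc Nᵀ D N, ← hqWN]
  -- restate the objective for U * W
  have key' : ∀ U : Matrix (Fin m) (Fin p) ℝ,
      (∫ ω, ∑ i, ((U * W).mulVec (X ω) i - Y ω i) ^ 2 ∂ℙ)
        = (U * Amat * Uᵀ).trace - 2 * (U * N).trace + SY.trace := by
    intro U
    rw [key (U * W)]
    have e1 : U * W * SX * (U * W)ᵀ = U * Amat * Uᵀ := by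
      rw [hAmat, Matrix.transpose_mul U W]
      simp only [Matrix.mul_assoc]
    have e2 : U * W * SYXᵀ = U * N := by rw [hN, Matrix.mul_assoc]
    rw [e1, e2]
  have hqVal : (∫ ω, ∑ i, ((qW * W).mulVec (X ω) i - Y ω i) ^ 2 ∂ℙ)
      = SY.trace - (qW * N).trace := by
    rw [key' qW]
    have h : (qW * Amat * qWᵀ).trace = (qW * N).trace := by rw [hqAq]
    rw [h]; ring
  constructor
  · intro U
    rw [hqVal, key' U]
    have hexp : ((U - qW) * Amat * (U - qW)ᵀ).trace
        = (U * Amat * Uᵀ).trace - 2 * (U * N).trace + (qW * N).trace := by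
      have h1 : (U - qW) * Amat * (U - qW)ᵀ
          = U * Amat * Uᵀ - U * Amat * qWᵀ - qW * Amat * Uᵀ + qW * Amat * qWᵀ := by
        simp only [Matrix.transpose_sub, Matrix.sub_mul, Matrix.mul_sub]
        abel
      rw [h1, Matrix.trace_add, Matrix.trace_sub, Matrix.trace_sub, hUAq U, hqAq]
      have h2 : (qW * Amat * Uᵀ).trace = (U * N).trace := by
        rw [← Matrix.trace_transpose (qW * Amat * Uᵀ), Matrix.transpose_mul (qW * Amat) Uᵀ,
          Matrix.transpose_transpose, Matrix.transpose_mul qW Amat, hAT,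
          ← Matrix.mul_assoc U Amat qWᵀ, hUAq U]
      rw [h2]; ring
    have hnn : 0 ≤ ((U - qW) * Amat * (U - qW)ᵀ).trace := by
      have h3 : (U - qW) * Amat * (U - qW)ᵀ = ((U - qW) * Bm) * ((U - qW) * Bm)ᵀ := by
        rw [hA, Matrix.transpose_mul (U - qW) Bm]
        simp only [Matrix.mul_assoc]
      rw [h3]
      exact trace_mul_transpose_self_nonneg _
    rw [hexp] at hnn
    linarith
  · rw [hqVal]
    congr 1
    have h1 : qW * N = Rᵀ * (G * Bm) * R := by
      rw [hqWN, hNBR, ← hBtDB, Matrix.transpose_mul Bm R]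
      simp only [Matrix.mul_assoc]
    have hRRt : R * Rᵀ = M := by
      rw [hR, hM, Matrix.transpose_mul K⁻¹ SYXᵀ, Matrix.transpose_transpose,
        Matrix.transpose_nonsing_inv, hKT]
      simp only [Matrix.mul_assoc]
    rw [h1, Matrix.trace_mul_comm (Rᵀ * (G * Bm)) R, ← Matrix.mul_assoc R Rᵀ (G * Bm),
      hRRt, Matrix.trace_mul_comm M (G * Bm)]
end

section
/- Let n > 1 and let ρ ∈ L²(ℝ, e^{−x²/2}dx) be continuous and not a polynomial. Then for every p ≥ 1 there exists a function representable by a width-(p+1) one-hidden-layer network with activation ρ that is not representable by any width-p such network; i.e., V_{ρ,p} ⊊ V_{ρ,p+1} for all p, so dim_*(ρ, n) = ∞. -/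
namespace Stmt13Aux

/-- Iterated finite differences with a list of steps. -/
def d1 : List ℝ → (ℝ → ℝ) → (ℝ → ℝ)
  | [], g => g
  | s :: S, g => d1 S (fun t => g (t + s) - g t)

lemma d1_nil (g : ℝ → ℝ) : d1 [] g = g := rfl

lemma d1_cons (s : ℝ) (S : List ℝ) (g : ℝ → ℝ) :
    d1 (s :: S) g = d1 S (fun t => g (t + s) - g t) := rfl

/-- Discrete antiderivative for polynomials. -/
lemma exists_discrete_antideriv (P : Polynomial ℝ) :
    ∃ Q : Polynomial ℝ, ∀ x : ℝ, Q.eval (x + 1) - Q.eval x = P.eval x := by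
  have key : ∀ m : ℕ, ∀ P : Polynomial ℝ, P.natDegree < m →
      ∃ Q : Polynomial ℝ, ∀ x : ℝ, Q.eval (x + 1) - Q.eval x = P.eval x := by
    intro m
    induction m with
    | zero => intro P h; omega
    | succ m ih =>
      intro P hP
      by_cases h0 : P = 0
      · exact ⟨0, by simp [h0]⟩
      set d := P.natDegree with hd
      -- the correction polynomial
      set T : Polynomial ℝ := (Polynomial.X + 1) ^ (d + 1) - Polynomial.X ^ (d + 1) with hT
      have hTcoeff : ∀ k, T.coeff k =
          ((d+1).choose k : ℝ) - if k = d + 1 then 1 else 0 := by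
        intro k
        simp [hT, Polynomial.coeff_X_add_one_pow, Polynomial.coeff_X_pow]
      set c : ℝ := P.leadingCoeff / (d + 1) with hc
      set P' : Polynomial ℝ := P - Polynomial.C c * T with hP'
      have hcoeff' : ∀ k, d ≤ k → P'.coeff k = 0 := by
        intro k hk
        rcases eq_or_lt_of_le hk with h | h
        · -- k = d
          subst h
          simp only [hP', Polynomial.coeff_sub, Polynomial.coeff_C_mul, hTcoeff]
          rw [if_neg (by omega)]
          have : ((d+1).choose d : ℝ) = (d+1 : ℝ) := by
            rw [Nat.choose_succ_self_right]; push_cast; ring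
          rw [this, hc]
          have hd1 : (d : ℝ) + 1 ≠ 0 := by positivity
          have hlead : P.coeff d = P.leadingCoeff := rfl
          field_simp [hlead]
          rw [hlead]; ring
        · -- k > d
          have hk1 : P.coeff k = 0 := Polynomial.coeff_eq_zero_of_natDegree_lt h
          simp only [hP', Polynomial.coeff_sub, Polynomial.coeff_C_mul, hTcoeff, hk1]
          rcases eq_or_lt_of_le (Nat.succ_le_of_lt h) with h2 | h2
          · rw [if_pos h2.symm, ← h2]
            simp
          · rw [if_neg (by omega), Nat.choose_eq_zero_of_lt h2]
            simp
      by_cases h0' : P' = 0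
      · refine ⟨Polynomial.C c * Polynomial.X ^ (d + 1), ?_⟩
        intro x
        have : P = Polynomial.C c * T := by
          have := sub_eq_zero.mp h0'
          linear_combination this
        rw [this]
        simp [hT]
        ring
      · have hdeg' : P'.natDegree < m := by
          have h1 : P'.natDegree < d ∨ d = 0 := by
            by_cases hd0 : d = 0
            · right; exact hd0
            · left
              by_contra hcon
              push_neg at hcon
              have := hcoeff' P'.natDegree hcon
              exact h0' (Polynomial.leadingCoeff_eq_zero.mp this)
          rcases h1 with h1 | h1
          · omega
          · exfalso
            apply h0'
            ext k
            rcases Nat.eq_zero_or_pos k with hk | hk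
            · have := hcoeff' 0 (by omega); simpa [hk] using this
            · exact (hcoeff' k (by omega)) ▸ rfl
        obtain ⟨Q', hQ'⟩ := ih P' hdeg'
        refine ⟨Polynomial.C c * Polynomial.X ^ (d + 1) + Q', ?_⟩
        intro x
        have h1 := hQ' x
        have h2 : P.eval x = P'.eval x + c * ((x+1)^(d+1) - x^(d+1)) := by
          simp [hP', hT]; try ring
        simp only [Polynomial.eval_add, Polynomial.eval_mul, Polynomial.eval_C,
          Polynomial.eval_pow, Polynomial.eval_X] at *
        rw [h2, ← h1]
        ring
  exact key (P.natDegree + 1) P (by omega)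


/-- A polynomial bounded on ℝ is constant. -/
lemma poly_const_of_bounded (P : Polynomial ℝ) (C : ℝ) (h : ∀ x, |P.eval x| ≤ C) :
    ∀ x, P.eval x = P.eval 0 := by
  have hdeg : P.degree ≤ 0 := by
    rw [← Polynomial.abs_isBoundedUnder_iff]
    exact ⟨C, Filter.eventually_map.mpr (Filter.Eventually.of_forall fun x => h x)⟩
  intro x
  rw [Polynomial.eq_C_of_degree_le_zero hdeg]
  simp

/-- A continuous additive function vanishing at 1 is zero. -/
lemma additive_continuous_zero (k : ℝ → ℝ) (hk : Continuous k)
    (hadd : ∀ x s, k (x + s) = k x + k s) (h1 : k 1 = 0) : ∀ x, k x = 0 := by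
  have hk0 : k 0 = 0 := by have := hadd 0 0; simpa using this.symm
  set f : ℝ →+ ℝ := AddMonoidHom.mk' k (fun a b => hadd a b) with hf
  have hq : ∀ q : ℚ, k (q : ℝ) = 0 := by
    intro q
    have : f ((q : ℝ) • (1:ℝ)) = (q : ℝ) • f 1 := by
      have := map_ratCast_smul f ℝ ℝ q (1:ℝ)
      simpa using this
    simpa [hf, h1] using this
  have : Set.EqOn k 0 (Set.range ((↑) : ℚ → ℝ)) := by
    rintro x ⟨q, rfl⟩
    simpa using hq q
  have := Continuous.ext_on Rat.denseRange_cast hk continuous_const this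
  intro x; exact congrFun this x

/-- Lemma B : continuous function whose all shifts-differences are polynomial
is itself a polynomial. -/
lemma poly_of_diffs_poly (g : ℝ → ℝ) (hg : Continuous g)
    (hP : ∀ s : ℝ, ∃ P : Polynomial ℝ, ∀ x, g (x + s) - g x = P.eval x) :
    ∃ Q : Polynomial ℝ, ∀ x, g x = Q.eval x := by
  obtain ⟨P₁, hP₁⟩ := hP 1
  obtain ⟨Q, hQ⟩ := exists_discrete_antideriv P₁
  set h : ℝ → ℝ := fun x => g x - Q.eval x with hh
  have hhc : Continuous h := hg.sub (Polynomial.continuous Q)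
  have hper : Function.Periodic h 1 := by
    intro x
    have h1 := hP₁ x
    have h2 := hQ x
    simp only [hh]
    linarith
  -- h is bounded
  obtain ⟨C, hC⟩ : ∃ C, ∀ x, |h x| ≤ C := by
    obtain ⟨C, hC⟩ := (isCompact_Icc (a := (0:ℝ)) (b := 1)).exists_bound_of_continuousOn
      (hhc.continuousOn.norm)
    refine ⟨C, fun x => ?_⟩
    have : h x = h (Int.fract x) := by
      have := hper.sub_int_mul_eq (x := x) ⌊x⌋
      simp only [mul_one] at this
      rw [← this, Int.self_sub_floor]
    rw [this]
    simpa using hC (Int.fract x) ⟨Int.fract_nonneg x, (Int.fract_lt_one x).le⟩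
  -- each difference of h is a bounded polynomial, hence constant
  have hdiff : ∀ s x, h (x + s) - h x = h s - h 0 := by
    intro s
    obtain ⟨P, hPs⟩ := hP s
    have hRs : ∀ x, h (x + s) - h x =
        (P - (Q.comp (Polynomial.X + Polynomial.C s) - Q)).eval x := by
      intro x
      simp only [hh, Polynomial.eval_sub, Polynomial.eval_comp, Polynomial.eval_add,
        Polynomial.eval_X, Polynomial.eval_C]
      rw [← hPs x]
      ring
    set R := P - (Q.comp (Polynomial.X + Polynomial.C s) - Q) with hR
    have hbdd : ∀ x, |R.eval x| ≤ 2 * C := by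
      intro x
      rw [← hRs x]
      calc |h (x+s) - h x| ≤ |h (x+s)| + |h x| := abs_sub _ _
        _ ≤ C + C := add_le_add (hC _) (hC _)
        _ = 2 * C := by ring
    have hconst := poly_const_of_bounded R (2*C) hbdd
    intro x
    rw [hRs x, hconst x, ← hRs 0]
    simp
  -- k := h · − h 0 is additive continuous with k 1 = 0
  set k : ℝ → ℝ := fun x => h x - h 0 with hkk
  have hkc : Continuous k := hhc.sub continuous_const
  have hkadd : ∀ x s, k (x + s) = k x + k s := by
    intro x s
    simp only [hkk]
    have := hdiff s x
    ring_nf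
    ring_nf at this
    linarith
  have hk1 : k 1 = 0 := by
    simp only [hkk]
    have := hper 0
    simp at this
    rw [this]
    ring
  have hk0 := additive_continuous_zero k hkc hkadd hk1
  refine ⟨Q + Polynomial.C (g 0 - Polynomial.eval 0 Q), fun x => ?_⟩
  have h0v : h 0 = g 0 - Polynomial.eval 0 Q := rfl
  have hxv : h x = g x - Polynomial.eval x Q := rfl
  have : h x = h 0 := by have := hk0 x; simp only [hkk] at this; linarith
  simp only [Polynomial.eval_add, Polynomial.eval_C]
  rw [hxv, h0v] at this
  linarith


/-- Fréchet-type theorem: a continuous function all of whose iterated differences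
(of a fixed order, arbitrary steps) vanish is a polynomial. -/
lemma frechet (m : ℕ) : ∀ g : ℝ → ℝ, Continuous g →
    (∀ S : List ℝ, S.length = m → ∀ τ, d1 S g τ = 0) →
    ∃ P : Polynomial ℝ, ∀ x, g x = P.eval x := by
  induction m with
  | zero =>
    intro g _ h
    exact ⟨0, fun x => by simpa [d1_nil] using h [] rfl x⟩
  | succ m ih =>
    intro g hg h
    apply poly_of_diffs_poly g hg
    intro s
    have hds : ∀ S : List ℝ, S.length = m → ∀ τ, d1 S (fun t => g (t + s) - g t) τ = 0 := by
      intro S hS τ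
      have := h (s :: S) (by simp [hS]) τ
      simpa [d1_cons] using this
    have hc : Continuous (fun t => g (t + s) - g t) :=
      (hg.comp (continuous_id.add continuous_const)).sub hg
    obtain ⟨P, hP⟩ := ih _ hc hds
    exact ⟨P, fun x => (hP x).symm ▸ (hP x)⟩


variable {n : ℕ}

/-- dot product on `Fin n → ℝ`. -/
def dot (a b : Fin n → ℝ) : ℝ := ∑ j, a j * b j

lemma dot_add_right (a x v : Fin n → ℝ) : dot a (x + v) = dot a x + dot a v := by
  simp [dot, mul_add, Finset.sum_add_distrib]

lemma dot_smul_right (a : Fin n → ℝ) (c : ℝ) (v : Fin n → ℝ) :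
    dot a (c • v) = c * dot a v := by
  simp only [dot, Finset.mul_sum, Pi.smul_apply, smul_eq_mul]
  exact Finset.sum_congr rfl (fun i _ => by ring)

lemma dot_comm (a b : Fin n → ℝ) : dot a b = dot b a := by
  simp [dot, mul_comm]

lemma list_sum_map_sub {α : Type*} (l : List α) (f g : α → ℝ) :
    (l.map f).sum - (l.map g).sum = (l.map fun a => f a - g a).sum := by
  induction l with
  | nil => simp
  | cons a l ih => simp [List.sum_cons]; linarith

/-- The key killing induction: from a vanishing combination of ridge functions,
all iterated differences of the distinguished profile vanish. -/
lemma key : ∀ (m : ℕ) (O : List ((ℝ → ℝ) × (Fin n → ℝ))), O.length = m →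
    ∀ (g : ℝ → ℝ) (b : Fin n → ℝ),
    (∀ τ : ℝ, ∃ x, dot b x = τ) →
    (∀ x, g (dot b x) + (O.map (fun q => q.1 (dot q.2 x))).sum = 0) →
    (∀ q ∈ O, ∃ v : Fin n → ℝ, dot q.2 v = 0 ∧ dot b v ≠ 0) →
    ∀ S : List ℝ, S.length = m → ∀ τ, d1 S g τ = 0 := by
  intro m
  induction m with
  | zero =>
    intro O hO g b hsurj hrel _ S hS τ
    have hO0 : O = [] := List.length_eq_zero_iff.mp hO
    have hS0 : S = [] := List.length_eq_zero_iff.mp hS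
    subst hO0; subst hS0
    obtain ⟨x, hx⟩ := hsurj τ
    have := hrel x
    simp only [List.map_nil, List.sum_nil, add_zero] at this
    rw [d1_nil, ← hx]
    exact this
  | succ m ih =>
    intro O hO g b hsurj hrel hv S hS τ
    rcases O with _ | ⟨q, O'⟩
    · simp at hO
    rcases S with _ | ⟨s, S'⟩
    · simp at hS
    obtain ⟨v, hv0, hvb⟩ := hv q List.mem_cons_self
    set u : Fin n → ℝ := (s / dot b v) • v with hu
    have hbu : dot b u = s := by
      rw [hu, dot_smul_right]
      field_simp
    have hqu : dot q.2 u = 0 := by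
      rw [hu, dot_smul_right, hv0, mul_zero]
    set O'' : List ((ℝ → ℝ) × (Fin n → ℝ)) :=
      O'.map (fun q' => ((fun t => q'.1 (t + dot q'.2 u) - q'.1 t), q'.2)) with hO''
    -- new relation
    have hrel' : ∀ x, (fun t => g (t + s) - g t) (dot b x) +
        (O''.map (fun q => q.1 (dot q.2 x))).sum = 0 := by
      intro x
      have h1 := hrel (x + u)
      have h2 := hrel x
      simp only [List.map_cons, List.sum_cons] at h1 h2
      rw [dot_add_right, hbu] at h1
      rw [dot_add_right, hqu, add_zero] at h1
      have h3 : (O'.map (fun q' => q'.1 (dot q'.2 (x+u)))).sum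
          - (O'.map (fun q' => q'.1 (dot q'.2 x))).sum
          = (O'.map (fun q' => q'.1 (dot q'.2 x + dot q'.2 u) - q'.1 (dot q'.2 x))).sum := by
        rw [list_sum_map_sub]
        congr 1
        apply List.map_congr_left
        intro a _
        rw [dot_add_right]
      have hcomp : (O''.map (fun q => q.1 (dot q.2 x))).sum
          = (O'.map (fun q' => q'.1 (dot q'.2 x + dot q'.2 u) - q'.1 (dot q'.2 x))).sum := by
        rw [hO'', List.map_map]
        rfl
      rw [hcomp]
      simp only []
      rw [← h3]
      linarith
    have hv' : ∀ q' ∈ O'', ∃ v : Fin n → ℝ, dot q'.2 v = 0 ∧ dot b v ≠ 0 := by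
      intro q' hq'
      rw [hO''] at hq'
      obtain ⟨a, ha, rfl⟩ := List.mem_map.mp hq'
      exact hv a (List.mem_cons_of_mem _ ha)
    have hlen : O''.length = m := by
      rw [hO'', List.length_map]
      simpa using hO
    have := ih O'' hlen (fun t => g (t + s) - g t) b hsurj hrel' hv' S' (by simpa using hS) τ
    rw [d1_cons]
    exact this


lemma dot_self_nonneg (a : Fin n → ℝ) : 0 ≤ dot a a :=
  Finset.sum_nonneg fun i _ => mul_self_nonneg _

lemma dot_self_eq_zero_iff (a : Fin n → ℝ) : dot a a = 0 ↔ a = 0 := by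
  constructor
  · intro h
    funext j
    have := (Finset.sum_eq_zero_iff_of_nonneg
      (fun i (_ : i ∈ Finset.univ) => mul_self_nonneg (a i))).mp h j (Finset.mem_univ j)
    have : a j * a j = 0 := this
    simpa [mul_self_eq_zero] using this
  · intro h; simp [h, dot]

lemma dot_lin_right (a b c : Fin n → ℝ) (α γ : ℝ) :
    dot a (fun j => α * b j - γ * c j) = α * dot a b - γ * dot a c := by
  simp only [dot, Finset.mul_sum, ← Finset.sum_sub_distrib]
  exact Finset.sum_congr rfl (fun i _ => by ring)

/-- If `b` is not a multiple of `a`, there is `v` orthogonal to `a` but not to `b`. -/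
lemma exists_orth (a b : Fin n → ℝ) (hb : b ≠ 0) (hnp : ¬∃ c : ℝ, b = c • a) :
    ∃ v : Fin n → ℝ, dot a v = 0 ∧ dot b v ≠ 0 := by
  by_cases ha : a = 0
  · refine ⟨b, by simp [ha, dot], ?_⟩
    rw [Ne, dot_self_eq_zero_iff]
    exact hb
  · set α : ℝ := dot a a with hα
    set γ : ℝ := dot a b with hγ
    have hα0 : α ≠ 0 := fun h => ha ((dot_self_eq_zero_iff a).mp h)
    set v : Fin n → ℝ := fun j => α * b j - γ * a j with hv
    have hav : dot a v = 0 := by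
      rw [hv, dot_lin_right, ← hγ, ← hα]
      ring
    refine ⟨v, hav, ?_⟩
    intro hbv
    -- then dot v v = 0, so v = 0, so b is a multiple of a
    have hvv : dot v v = 0 := by
      have h1 : dot v v = α * dot v b - γ * dot v a := by
        rw [show dot v v = dot v (fun j => α * b j - γ * a j) from rfl, dot_lin_right]
      rw [h1, dot_comm v b, dot_comm v a, hav, hbv]
      ring
    have hv0 : v = 0 := (dot_self_eq_zero_iff v).mp hvv
    apply hnp
    refine ⟨γ / α, ?_⟩
    funext j
    have : α * b j - γ * a j = 0 := congrFun hv0 j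
    have : α * b j = γ * a j := by linarith
    simp only [Pi.smul_apply, smul_eq_mul]
    field_simp
    linarith [this]


/-- vector supported on two fixed coordinates -/
def vec (j0 j1 : Fin n) (a b : ℝ) : Fin n → ℝ :=
  fun j => if j = j0 then a else if j = j1 then b else 0

lemma dot_vec {j0 j1 : Fin n} (hne : j0 ≠ j1) (a b c d : ℝ) :
    dot (vec j0 j1 a b) (vec j0 j1 c d) = a * c + b * d := by
  rw [dot, ← Finset.sum_subset (Finset.subset_univ ({j0, j1} : Finset (Fin n)))]
  · rw [Finset.sum_pair hne]
    simp [vec, hne, hne.symm]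
  · intro x _ hx
    simp only [Finset.mem_insert, Finset.mem_singleton, not_or] at hx
    simp [vec, hx.1, hx.2]

lemma vec_j0 {j0 j1 : Fin n} (a b : ℝ) : vec j0 j1 a b j0 = a := by simp [vec]

lemma vec_j1 {j0 j1 : Fin n} (hne : j0 ≠ j1) (a b : ℝ) : vec j0 j1 a b j1 = b := by
  simp [vec, hne.symm]

end Stmt13Aux



open MeasureTheory Stmt13Aux

/-- For `n > 1` and a continuous, non-polynomial `ρ ∈ L²(ℝ, e^{−x²/2}dx)`,
width-(p+1) networks represent strictly more functions than width-p networks,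
for every `p ≥ 1`; hence `dim_*(ρ, n) = ∞`. -/
theorem stmt13 (n : ℕ) (hn : 1 < n) (ρ : ℝ → ℝ) (hcont : Continuous ρ)
    (hL2 : Integrable (fun x : ℝ => ρ x ^ 2 * Real.exp (-(x ^ 2) / 2)))
    (hpoly : ¬∃ P : Polynomial ℝ, ∀ x : ℝ, ρ x = P.eval x) :
    ∀ p : ℕ, 1 ≤ p →
      {f : (Fin n → ℝ) → ℝ | ∃ (u : Fin p → ℝ) (w : Fin p → Fin n → ℝ),
          f = fun x => ∑ i, u i * ρ (∑ j, w i j * x j)}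
        ⊂ {f : (Fin n → ℝ) → ℝ |
            ∃ (u : Fin (p + 1) → ℝ) (w : Fin (p + 1) → Fin n → ℝ),
              f = fun x => ∑ i, u i * ρ (∑ j, w i j * x j)} := by
  intro p hp
  have hn0 : 0 < n := by omega
  set j0 : Fin n := ⟨0, hn0⟩ with hj0
  set j1 : Fin n := ⟨1, hn⟩ with hj1
  have hj01 : j0 ≠ j1 := by
    intro h
    have := congrArg Fin.val h
    simp [hj0, hj1] at this
  constructor
  · -- inclusion
    rintro f ⟨u, w, rfl⟩
    refine ⟨Fin.snoc u 0, Fin.snoc w 0, ?_⟩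
    funext x
    rw [Fin.sum_univ_castSucc]
    simp [Fin.snoc_castSucc, Fin.snoc_last]
  · -- strictness
    intro hsub
    -- the distinguished directions
    set w : Fin (p+1) → Fin n → ℝ := fun i => vec j0 j1 1 ((i : ℕ) : ℝ) with hw
    have hmem : (fun x => ∑ i : Fin (p+1), (fun _ => (1:ℝ)) i * ρ (∑ j, w i j * x j)) ∈
        {f : (Fin n → ℝ) → ℝ | ∃ (u : Fin (p + 1) → ℝ) (w : Fin (p + 1) → Fin n → ℝ),
          f = fun x => ∑ i, u i * ρ (∑ j, w i j * x j)} :=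
      ⟨fun _ => 1, w, rfl⟩
    obtain ⟨v, w', heq⟩ := hsub hmem
    have hpt : ∀ x : Fin n → ℝ, ∑ i : Fin (p+1), ρ (dot (w i) x)
        = ∑ j : Fin p, v j * ρ (dot (w' j) x) := by
      intro x
      have := congrFun heq x
      simpa [dot] using this
    -- basic facts about w
    have hwj0 : ∀ i, w i j0 = 1 := fun i => vec_j0 _ _
    have hwj1 : ∀ i, w i j1 = ((i : ℕ) : ℝ) := fun i => vec_j1 hj01 _ _
    have hwne : ∀ i, w i ≠ 0 := by
      intro i h
      have := congrFun h j0
      rw [hwj0 i] at this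
      simp at this
    -- pigeonhole: some i0 is in no span of the w' j
    have hpigeon : ∃ i0 : Fin (p+1), ∀ j : Fin p, ¬∃ c : ℝ, w i0 = c • w' j := by
      by_contra hcon
      push_neg at hcon
      choose F c hF using hcon
      have hinj : Function.Injective F := by
        intro i i' hii
        have h1 := hF i
        have h2 := hF i'
        rw [hii] at h1
        have e1 : (1:ℝ) = c i * w' (F i') j0 := by
          have := congrFun h1 j0; rw [hwj0 i] at this; simpa using this
        have e2 : (1:ℝ) = c i' * w' (F i') j0 := by
          have := congrFun h2 j0; rw [hwj0 i'] at this; simpa using this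
        have hwj0ne : w' (F i') j0 ≠ 0 := by
          intro h; rw [h] at e1; simp at e1
        have hcc : c i = c i' := by
          have : c i * w' (F i') j0 = c i' * w' (F i') j0 := by linarith
          exact mul_right_cancel₀ hwj0ne this
        have : w i = w i' := by rw [h1, h2, hcc]
        have := congrFun this j1
        rw [hwj1 i, hwj1 i'] at this
        exact Fin.val_injective (Nat.cast_injective this)
      have := Fintype.card_le_of_injective F hinj
      simp at this
    obtain ⟨i0, hi0⟩ := hpigeon
    set b : Fin n → ℝ := w i0 with hb
    -- surjectivity of dot b
    have hsurj : ∀ τ : ℝ, ∃ x, dot b x = τ := by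
      intro τ
      refine ⟨vec j0 j1 τ 0, ?_⟩
      rw [hb, hw]
      rw [dot_vec hj01]
      ring
    -- the list of remaining terms
    set O : List ((ℝ → ℝ) × (Fin n → ℝ)) :=
      ((Finset.univ.erase i0).toList.map fun i => ((fun t => ρ t), w i)) ++
      ((List.finRange p).map fun j => ((fun t => -(v j * ρ t)), w' j)) with hO
    -- the relation
    have hrel : ∀ x, ρ (dot b x) + (O.map (fun q => q.1 (dot q.2 x))).sum = 0 := by
      intro x
      rw [hO, List.map_append, List.sum_append, List.map_map, List.map_map]
      have e1 : (((Finset.univ.erase i0).toList.map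
          ((fun q : (ℝ → ℝ) × (Fin n → ℝ) => q.1 (dot q.2 x)) ∘
            (fun i => ((fun t => ρ t), w i)))).sum)
          = ∑ i ∈ Finset.univ.erase i0, ρ (dot (w i) x) := by
        rw [Finset.sum_map_toList]
        rfl
      have e2 : (((List.finRange p).map
          ((fun q : (ℝ → ℝ) × (Fin n → ℝ) => q.1 (dot q.2 x)) ∘
            (fun j => ((fun t => -(v j * ρ t)), w' j)))).sum)
          = ∑ j : Fin p, -(v j * ρ (dot (w' j) x)) := by
        rw [Fin.sum_univ_def]
        rfl
      rw [e1, e2]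
      have e3 : ρ (dot b x) + ∑ i ∈ Finset.univ.erase i0, ρ (dot (w i) x)
          = ∑ i : Fin (p+1), ρ (dot (w i) x) := by
        rw [hb]
        exact Finset.add_sum_erase _ (fun i => ρ (dot (w i) x)) (Finset.mem_univ i0)
      have e4 := hpt x
      rw [← add_assoc, e3, e4, ← Finset.sum_add_distrib]
      simp
    -- the orthogonality data
    have hv : ∀ q ∈ O, ∃ vv : Fin n → ℝ, dot q.2 vv = 0 ∧ dot b vv ≠ 0 := by
      intro q hq
      rw [hO, List.mem_append] at hq
      rcases hq with hq | hq
      · obtain ⟨i, hi, rfl⟩ := List.mem_map.mp hq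
        rw [Finset.mem_toList, Finset.mem_erase] at hi
        refine ⟨vec j0 j1 ((i : ℕ) : ℝ) (-1), ?_, ?_⟩
        · show dot (w i) _ = 0
          rw [hw, dot_vec hj01]
          ring
        · show dot b _ ≠ 0
          rw [hb, hw, dot_vec hj01]
          intro h
          have : ((i : ℕ) : ℝ) = ((i0 : ℕ) : ℝ) := by linarith
          exact hi.1 (Fin.val_injective (Nat.cast_injective this))
      · obtain ⟨j, hj, rfl⟩ := List.mem_map.mp hq
        exact exists_orth (w' j) b (hwne i0) (hi0 j)
    -- apply key and frechet
    have hkey := key O.length O rfl ρ b hsurj hrel hv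
    obtain ⟨P, hP⟩ := frechet O.length ρ hcont hkey
    exact hpoly ⟨P, hP⟩
end
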